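/- Define I₃ : Λ³H → Hom_R(H, Λ²H) by I₃(v∧w∧u)(z) = ⟨z,w⟩ u∧v + ⟨z,u⟩ v∧w + ⟨z,v⟩ w∧u, and define Φ : H ⊗_R Λ²H → Hom_R(H, Λ²H) by Φ(x ⊗ η)(z) = ⟨z, x⟩ η. Then I₃ is a well-defined injective R-linear map, Φ is an R-linear isomorphism, and Hom_R(H, Λ²H) is the internal direct sum of the submodules I₃(Λ³H) and Φ(𝔱). -/

import Mathlib

namespace Paper

open ExteriorAlgebra

open scoped TensorProduct

variable {R : Type*} [CommRing R] {H : Type*} [AddCommGroup H] [Module R H]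

theorem wedge_mem (v w : H) : ι R v * ι R w ∈ ⋀[R]^2 H := by
  rw [show (⋀[R]^2 H) = LinearMap.range (ι R (M := H)) * LinearMap.range (ι R (M := H)) from
    sq _]
  exact Submodule.mul_mem_mul (LinearMap.mem_range_self _ v) (LinearMap.mem_range_self _ w)

/-- The wedge product `H × H → Λ²H` as a bilinear map. -/
noncomputable def wedge : H →ₗ[R] H →ₗ[R] ↥(⋀[R]^2 H) :=
  LinearMap.mk₂ R (fun v w => ⟨ι R v * ι R w, wedge_mem v w⟩)
    (fun v v' w => Subtype.ext (by simp [add_mul]))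
    (fun c v w => Subtype.ext (by simp [smul_mul_assoc]))
    (fun v w w' => Subtype.ext (by simp [mul_add]))
    (fun c v w => Subtype.ext (by simp [mul_smul_comm]))

/-- The submodule `𝔱 ⊆ H ⊗ Λ²H` spanned by the elements `u⊗(v∧w) − v⊗(w∧u)`. -/
noncomputable def tSub (R : Type*) [CommRing R] (H : Type*) [AddCommGroup H] [Module R H] :
    Submodule R (H ⊗[R] ↥(⋀[R]^2 H)) :=
  Submodule.span R
    {x | ∃ u v w : H, x = u ⊗ₜ[R] (wedge v w) - v ⊗ₜ[R] (wedge w u)}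

/-- The symplectic form on `H` determined by a basis `e₁, …, e_{2g}`,
with `⟨e_{2i-1}, e_{2i}⟩ = 1 = −⟨e_{2i}, e_{2i-1}⟩`. -/
noncomputable def sympForm {g : ℕ} (e : Module.Basis (Fin (2 * g)) R H) : H →ₗ[R] H →ₗ[R] R :=
  ∑ i : Fin g,
    ((e.coord ⟨2 * i, by have := i.isLt; omega⟩).smulRight
        (e.coord ⟨2 * i + 1, by have := i.isLt; omega⟩) -
      (e.coord ⟨2 * i + 1, by have := i.isLt; omega⟩).smulRight
        (e.coord ⟨2 * i, by have := i.isLt; omega⟩))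


theorem wedge3_mem (v w u : H) : ι R v * ι R w * ι R u ∈ ⋀[R]^3 H := by
  rw [show (⋀[R]^3 H) = (LinearMap.range (ι R (M := H))) ^ 2 * LinearMap.range (ι R (M := H))
    from pow_succ _ 2]
  exact Submodule.mul_mem_mul (wedge_mem v w) (LinearMap.mem_range_self _ u)

/-- The wedge product `v ∧ w ∧ u ∈ Λ³H` of three vectors. -/
noncomputable def wedge3 (v w u : H) : ↥(⋀[R]^3 H) :=
  ⟨ι R v * ι R w * ι R u, wedge3_mem v w u⟩

-- ### auxiliary lemmas

lemma ι_swap (x y : H) : ι R x * ι R y = -(ι R y * ι R x) :=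
  eq_neg_of_add_eq_zero_left (ι_add_mul_swap x y)

lemma wedge_self (v : H) : wedge (R := R) v v = 0 :=
  Subtype.ext (ι_sq_zero v)

lemma wedge_swap (v w : H) : wedge (R := R) w v = - wedge v w :=
  Subtype.ext (ι_swap w v)

lemma ι_cyc (a b c : H) : ι R c * ι R a * ι R b = ι R a * ι R b * ι R c := by
  rw [show ι R c * ι R a = -(ι R a * ι R c) from ι_swap c a, neg_mul, mul_assoc,
    show ι R c * ι R b = -(ι R b * ι R c) from ι_swap c b, mul_neg, neg_neg, ← mul_assoc]

lemma wedge3_cyc (a b c : H) : wedge3 (R := R) c a b = wedge3 a b c :=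
  Subtype.ext (ι_cyc a b c)

variable (R H) in
/-- `T(v∧w∧u) = w⊗(u∧v) + u⊗(v∧w) + v⊗(w∧u)` as a bare function. -/
noncomputable def Tfun (v : Fin 3 → H) : H ⊗[R] ↥(⋀[R]^2 H) :=
  v 1 ⊗ₜ[R] wedge (v 2) (v 0) + v 2 ⊗ₜ[R] wedge (v 0) (v 1) + v 0 ⊗ₜ[R] wedge (v 1) (v 2)

lemma T01 (v : Fin 3 → H) (h : v 0 = v 1) : Tfun R H v = 0 := by
  unfold Tfun
  rw [h, wedge_self, TensorProduct.tmul_zero, wedge_swap (v 1) (v 2), TensorProduct.tmul_neg]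
  abel

lemma T12 (v : Fin 3 → H) (h : v 1 = v 2) : Tfun R H v = 0 := by
  unfold Tfun
  rw [h, wedge_self, TensorProduct.tmul_zero, wedge_swap (v 0) (v 2), TensorProduct.tmul_neg]
  abel

lemma T02 (v : Fin 3 → H) (h : v 0 = v 2) : Tfun R H v = 0 := by
  unfold Tfun
  rw [h, wedge_self, TensorProduct.tmul_zero, wedge_swap (v 1) (v 2), TensorProduct.tmul_neg]
  abel

noncomputable def Amap : H [⋀^Fin 3]→ₗ[R] (H ⊗[R] ↥(⋀[R]^2 H)) where
  toFun := Tfun R H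
  map_update_add' := by
    intro _ v i x y
    fin_cases i <;>
      simp [Tfun, Function.update, map_add, LinearMap.add_apply,
        TensorProduct.add_tmul, TensorProduct.tmul_add, Fin.ext_iff] <;>
      abel
  map_update_smul' := by
    intro _ v i c x
    fin_cases i <;>
      simp [Tfun, Function.update, map_smul, LinearMap.smul_apply,
        TensorProduct.smul_tmul, TensorProduct.tmul_smul, Fin.ext_iff, smul_add] <;>
      abel
  map_eq_zero_of_eq' := by
    intro v i j h hij
    fin_cases i <;> fin_cases j
    · exact absurd rfl hij
    · exact T01 v h
    · exact T02 v h
    · exact T01 v (h.symm)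
    · exact absurd rfl hij
    · exact T12 v h
    · exact T02 v (h.symm)
    · exact T12 v (h.symm)
    · exact absurd rfl hij

variable (R H) in
noncomputable def f3 : ∀ i : ℕ, H [⋀^Fin i]→ₗ[R] (H ⊗[R] ↥(⋀[R]^2 H)) :=
  fun i => match i with
    | 3 => Amap
    | _ => 0

variable (R H) in
/-- The map `T : Λ³H → H ⊗ Λ²H`, `v∧w∧u ↦ w⊗(u∧v) + u⊗(v∧w) + v⊗(w∧u)`. -/
noncomputable def Tl : ↥(⋀[R]^3 H) →ₗ[R] H ⊗[R] ↥(⋀[R]^2 H) :=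
  (liftAlternating (R := R) (M := H) (N := H ⊗[R] ↥(⋀[R]^2 H)) (f3 R H)).comp
    ((⋀[R]^3 H).subtype)

lemma ιMulti_three (v : Fin 3 → H) :
    (ιMulti R 3 v : ExteriorAlgebra R H) = ι R (v 0) * ι R (v 1) * ι R (v 2) := by
  rw [ιMulti_apply]
  simp [List.ofFn_succ, mul_assoc]

lemma wedge3_val (v w u : H) : (wedge3 (R := R) v w u : ExteriorAlgebra R H) =
    ιMulti R 3 ![v, w, u] := by
  rw [ιMulti_three]
  simp [wedge3]

lemma Tl_wedge3 (v w u : H) :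
    Tl R H (wedge3 v w u) =
      w ⊗ₜ[R] wedge u v + u ⊗ₜ[R] wedge v w + v ⊗ₜ[R] wedge w u := by
  have : Tl R H (wedge3 v w u) = liftAlternating (f3 R H) (ιMulti R 3 ![v, w, u]) := by
    rw [Tl, LinearMap.comp_apply, Submodule.subtype_apply, wedge3_val]
  rw [this, liftAlternating_apply_ιMulti]
  show Tfun R H ![v, w, u] = _
  simp [Tfun]

lemma mul2_mem (x : H) (η : ↥(⋀[R]^2 H)) : ι R x * (η : ExteriorAlgebra R H) ∈ ⋀[R]^3 H := by
  rw [show (⋀[R]^3 H) = LinearMap.range (ι R (M := H)) * (LinearMap.range (ι R (M := H))) ^ 2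
    from pow_succ' _ 2]
  exact Submodule.mul_mem_mul (LinearMap.mem_range_self _ x) η.2

variable (R H) in
noncomputable def mul2 : H →ₗ[R] ↥(⋀[R]^2 H) →ₗ[R] ↥(⋀[R]^3 H) :=
  LinearMap.mk₂ R (fun x η => ⟨ι R x * η.1, mul2_mem x η⟩)
    (fun x x' η => Subtype.ext (by simp [add_mul]))
    (fun c x η => Subtype.ext (by simp [smul_mul_assoc]))
    (fun x η η' => Subtype.ext (by simp [mul_add]))
    (fun c x η => Subtype.ext (by simp [mul_smul_comm]))

variable (R H) in
/-- The multiplication map `μ : H ⊗ Λ²H → Λ³H`. -/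
noncomputable def μl : (H ⊗[R] ↥(⋀[R]^2 H)) →ₗ[R] ↥(⋀[R]^3 H) :=
  TensorProduct.lift (mul2 R H)

lemma μl_tmul_wedge (x v w : H) : μl R H (x ⊗ₜ[R] wedge v w) = wedge3 x v w := by
  apply Subtype.ext
  show ι R x * (ι R v * ι R w) = _
  rw [← mul_assoc]
  rfl

lemma span_subtype_top {M : Type*} [AddCommGroup M] [Module R M] (p : Submodule R M)
    (S : Set ↥p) (h : Submodule.span R (Subtype.val '' S) = p) : Submodule.span R S = ⊤ := by
  apply Submodule.map_injective_of_injective p.injective_subtype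
  rw [Submodule.map_span, Submodule.map_top, Submodule.range_subtype]
  simpa using h

lemma ιMulti_two (v : Fin 2 → H) :
    (ιMulti R 2 v : ExteriorAlgebra R H) = ι R (v 0) * ι R (v 1) := by
  rw [ιMulti_apply]
  simp [List.ofFn_succ, mul_assoc]

variable (R H) in
lemma span2 : Submodule.span R {η : ↥(⋀[R]^2 H) | ∃ v w, η = wedge v w} = ⊤ := by
  apply span_subtype_top
  have : Subtype.val '' {η : ↥(⋀[R]^2 H) | ∃ v w, η = wedge v w} =
      Set.range (ιMulti R 2 (M := H)) := by
    ext x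
    simp only [Set.mem_image, Set.mem_range, Set.mem_setOf_eq]
    constructor
    · rintro ⟨η, ⟨v, w, rfl⟩, rfl⟩
      exact ⟨![v, w], by rw [ιMulti_two]; rfl⟩
    · rintro ⟨v, rfl⟩
      exact ⟨wedge (v 0) (v 1), ⟨v 0, v 1, rfl⟩, by rw [ιMulti_two]; rfl⟩
  rw [this, ιMulti_span_fixedDegree]

variable (R H) in
lemma span3 : Submodule.span R {x : ↥(⋀[R]^3 H) | ∃ v w u, x = wedge3 v w u} = ⊤ := by
  apply span_subtype_top
  have : Subtype.val '' {x : ↥(⋀[R]^3 H) | ∃ v w u, x = wedge3 v w u} =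
      Set.range (ιMulti R 3 (M := H)) := by
    ext x
    simp only [Set.mem_image, Set.mem_range, Set.mem_setOf_eq]
    constructor
    · rintro ⟨η, ⟨v, w, u, rfl⟩, rfl⟩
      exact ⟨![v, w, u], (wedge3_val v w u).symm⟩
    · rintro ⟨v, rfl⟩
      exact ⟨wedge3 (v 0) (v 1) (v 2), ⟨v 0, v 1, v 2, rfl⟩, by rw [ιMulti_three]; rfl⟩
  rw [this, ιMulti_span_fixedDegree]

lemma μl_Tl (x : ↥(⋀[R]^3 H)) : μl R H (Tl R H x) = (3 : R) • x := by
  have hx : x ∈ Submodule.span R {x : ↥(⋀[R]^3 H) | ∃ v w u, x = wedge3 v w u} := by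
    rw [span3]; trivial
  induction hx using Submodule.span_induction with
  | mem x h =>
    obtain ⟨v, w, u, rfl⟩ := h
    rw [Tl_wedge3]
    simp only [map_add, μl_tmul_wedge]
    rw [wedge3_cyc u v w, wedge3_cyc v w u,
      show (3 : R) = 1 + 1 + 1 by norm_num, add_smul, add_smul, one_smul]
  | zero => simp
  | add x y hx hy ihx ihy => simp [map_add, ihx, ihy, smul_add]
  | smul a x hx ih => rw [map_smul, map_smul, ih, smul_comm]

variable (R H) in
lemma t_le_ker : tSub R H ≤ LinearMap.ker (μl R H) := by
  rw [tSub, Submodule.span_le]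
  rintro _ ⟨u, v, w, rfl⟩
  simp only [SetLike.mem_coe, LinearMap.mem_ker, map_sub, μl_tmul_wedge]
  rw [wedge3_cyc v w u, sub_self]

lemma pi_mem (c : R) (hc : (3 : R) * c = 1) (m : H ⊗[R] ↥(⋀[R]^2 H)) :
    m - c • Tl R H (μl R H m) ∈ tSub R H := by
  have key : ∀ (x : H) (η : ↥(⋀[R]^2 H)),
      (x ⊗ₜ[R] η) - c • Tl R H (μl R H (x ⊗ₜ[R] η)) ∈ tSub R H := by
    intro x η
    have hη : η ∈ Submodule.span R {η : ↥(⋀[R]^2 H) | ∃ v w, η = wedge v w} := by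
      rw [span2]; trivial
    induction hη using Submodule.span_induction with
    | mem η h =>
      obtain ⟨v, w, rfl⟩ := h
      rw [μl_tmul_wedge, Tl_wedge3]
      have h1 : (x ⊗ₜ[R] wedge v w - v ⊗ₜ[R] wedge w x : H ⊗[R] ↥(⋀[R]^2 H)) ∈ tSub R H :=
        Submodule.subset_span ⟨x, v, w, rfl⟩
      have h2 : (x ⊗ₜ[R] wedge w v - w ⊗ₜ[R] wedge v x : H ⊗[R] ↥(⋀[R]^2 H)) ∈ tSub R H :=
        Submodule.subset_span ⟨x, w, v, rfl⟩
      have h2' : (x ⊗ₜ[R] wedge w v - w ⊗ₜ[R] wedge v x : H ⊗[R] ↥(⋀[R]^2 H)) =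
          -(x ⊗ₜ[R] wedge v w) + w ⊗ₜ[R] wedge x v := by
        rw [wedge_swap v w, wedge_swap x v, TensorProduct.tmul_neg, TensorProduct.tmul_neg]
        abel
      have hgoal : (x ⊗ₜ[R] wedge v w : H ⊗[R] ↥(⋀[R]^2 H)) -
            c • (v ⊗ₜ[R] wedge w x + w ⊗ₜ[R] wedge x v + x ⊗ₜ[R] wedge v w) =
          c • (x ⊗ₜ[R] wedge v w - v ⊗ₜ[R] wedge w x) +
            (-c) • (-(x ⊗ₜ[R] wedge v w) + w ⊗ₜ[R] wedge x v) := by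
        match_scalars <;> first | ring1 | linear_combination hc | linear_combination -hc
      rw [hgoal]
      exact add_mem (Submodule.smul_mem _ _ h1) (Submodule.smul_mem _ _ (h2' ▸ h2))
    | zero => simpa using (tSub R H).zero_mem
    | add η η' hη hη' ih ih' =>
      have : (x ⊗ₜ[R] (η + η')) - c • Tl R H (μl R H (x ⊗ₜ[R] (η + η'))) =
          ((x ⊗ₜ[R] η) - c • Tl R H (μl R H (x ⊗ₜ[R] η))) +
            ((x ⊗ₜ[R] η') - c • Tl R H (μl R H (x ⊗ₜ[R] η'))) := by
        rw [TensorProduct.tmul_add]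
        simp only [map_add, smul_add]
        abel
      rw [this]; exact add_mem ih ih'
    | smul a η hη ih =>
      have : (x ⊗ₜ[R] (a • η)) - c • Tl R H (μl R H (x ⊗ₜ[R] (a • η))) =
          a • ((x ⊗ₜ[R] η) - c • Tl R H (μl R H (x ⊗ₜ[R] η))) := by
        rw [TensorProduct.tmul_smul]
        simp only [map_smul]
        module
      rw [this]; exact Submodule.smul_mem _ _ ih
  have hm : m ∈ Submodule.span R {t : H ⊗[R] ↥(⋀[R]^2 H) | ∃ x η, x ⊗ₜ[R] η = t} := by
    rw [TensorProduct.span_tmul_eq_top]; trivial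
  induction hm using Submodule.span_induction with
  | mem t h => obtain ⟨x, η, rfl⟩ := h; exact key x η
  | zero => simpa using (tSub R H).zero_mem
  | add x y hx hy ihx ihy =>
    have : (x + y) - c • Tl R H (μl R H (x + y)) =
        (x - c • Tl R H (μl R H x)) + (y - c • Tl R H (μl R H y)) := by
      simp only [map_add, smul_add]; abel
    rw [this]; exact add_mem ihx ihy
  | smul a x hx ih =>
    have : (a • x) - c • Tl R H (μl R H (a • x)) = a • (x - c • Tl R H (μl R H x)) := by
      simp only [map_smul]; module
    rw [this]; exact Submodule.smul_mem _ _ ih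

section Symp

variable {g : ℕ}

def ia (i : Fin g) : Fin (2 * g) := ⟨2 * i, by have := i.isLt; omega⟩
def ib (i : Fin g) : Fin (2 * g) := ⟨2 * i + 1, by have := i.isLt; omega⟩

@[simp] lemma ia_inj {i i' : Fin g} : ia i = ia i' ↔ i = i' := by
  simp only [ia, Fin.ext_iff]; omega

@[simp] lemma ib_inj {i i' : Fin g} : ib i = ib i' ↔ i = i' := by
  simp only [ib, Fin.ext_iff]; omega

@[simp] lemma ia_ne_ib {i i' : Fin g} : ia i ≠ ib i' := by
  simp only [ia, ib, ne_eq, Fin.ext_iff]; omega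

@[simp] lemma ib_ne_ia {i i' : Fin g} : ib i ≠ ia i' := by
  simp only [ia, ib, ne_eq, Fin.ext_iff]; omega

lemma symp_apply (e : Module.Basis (Fin (2 * g)) R H) (z x : H) :
    sympForm e z x = ∑ i : Fin g,
      (e.coord (ia i) z * e.coord (ib i) x - e.coord (ib i) z * e.coord (ia i) x) := by
  simp [sympForm, ia, ib, LinearMap.sum_apply, smul_eq_mul]

lemma coord_basis (e : Module.Basis (Fin (2 * g)) R H) (k j : Fin (2 * g)) :
    e.coord k (e j) = if j = k then 1 else 0 := by
  simp [Module.Basis.coord_apply, Finsupp.single_apply]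

lemma symp_aa (e : Module.Basis (Fin (2 * g)) R H) (i i' : Fin g) :
    sympForm e (e (ia i)) (e (ia i')) = 0 := by
  rw [symp_apply]
  simp [coord_basis]

lemma symp_bb (e : Module.Basis (Fin (2 * g)) R H) (i i' : Fin g) :
    sympForm e (e (ib i)) (e (ib i')) = 0 := by
  rw [symp_apply]
  simp [coord_basis]

lemma symp_ab (e : Module.Basis (Fin (2 * g)) R H) (i i' : Fin g) :
    sympForm e (e (ia i)) (e (ib i')) = if i = i' then 1 else 0 := by
  rw [symp_apply]
  simp [coord_basis, Finsupp.single_apply, mul_ite, ite_mul, mul_one, mul_zero,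
    Finset.sum_ite_eq, eq_comm]

lemma symp_ba (e : Module.Basis (Fin (2 * g)) R H) (i i' : Fin g) :
    sympForm e (e (ib i)) (e (ia i')) = if i = i' then -1 else 0 := by
  rw [symp_apply]
  simp [coord_basis, Finsupp.single_apply, mul_ite, ite_mul, mul_one, mul_zero,
    Finset.sum_ite_eq, eq_comm, apply_ite Neg.neg]
  split <;> simp

lemma fin_parity (j : Fin (2 * g)) : (∃ i, j = ia i) ∨ (∃ i, j = ib i) := by
  rcases Nat.even_or_odd j.val with ⟨k, hk⟩ | ⟨k, hk⟩
  · exact Or.inl ⟨⟨k, by have := j.isLt; omega⟩, by simp [ia, Fin.ext_iff]; omega⟩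
  · exact Or.inr ⟨⟨k, by have := j.isLt; omega⟩, by simp [ib, Fin.ext_iff]; omega⟩

variable (R H) in
noncomputable def Kmap (e : Module.Basis (Fin (2 * g)) R H) : Module.Dual R H →ₗ[R] H :=
  ∑ i : Fin g, ((LinearMap.applyₗ (e (ia i))).smulRight (e (ib i)) -
    (LinearMap.applyₗ (e (ib i))).smulRight (e (ia i)))

lemma Kmap_apply (e : Module.Basis (Fin (2 * g)) R H) (f : Module.Dual R H) :
    Kmap R H e f = ∑ i : Fin g, (f (e (ia i)) • e (ib i) - f (e (ib i)) • e (ia i)) := by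
  simp [Kmap, LinearMap.sum_apply]

lemma KJ (e : Module.Basis (Fin (2 * g)) R H) (j : Fin (2 * g)) :
    Kmap R H e ((sympForm e).flip (e j)) = e j := by
  rw [Kmap_apply]
  rcases fin_parity j with ⟨i₀, rfl⟩ | ⟨i₀, rfl⟩
  · simp only [LinearMap.flip_apply, symp_aa, symp_ba, zero_smul, ite_smul, neg_smul,
      zero_sub, neg_neg, one_smul]
    simp [Finset.sum_ite_eq, eq_comm]
  · simp only [LinearMap.flip_apply, symp_ab, symp_bb, zero_smul, ite_smul, one_smul,
      sub_zero]
    simp [Finset.sum_ite_eq, eq_comm]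

lemma JK (e : Module.Basis (Fin (2 * g)) R H) (f : Module.Dual R H) (j : Fin (2 * g)) :
    (sympForm e).flip (Kmap R H e f) (e j) = f (e j) := by
  rw [LinearMap.flip_apply, Kmap_apply, map_sum]
  rcases fin_parity j with ⟨i₀, rfl⟩ | ⟨i₀, rfl⟩
  · simp only [map_sub, map_smul, symp_aa, symp_ab, smul_eq_mul, mul_zero, mul_ite, mul_one,
      sub_zero]
    simp [Finset.sum_ite_eq, eq_comm]
  · simp only [map_sub, map_smul, symp_ba, symp_bb, smul_eq_mul, mul_zero, mul_ite, mul_one,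
      zero_sub, mul_neg]
    simp [Finset.sum_ite_eq, eq_comm]

variable (R H) in
/-- The isomorphism `H ≃ H*` induced by the symplectic form, `x ↦ ⟨·, x⟩`. -/
noncomputable def JE (e : Module.Basis (Fin (2 * g)) R H) : H ≃ₗ[R] Module.Dual R H :=
  LinearEquiv.ofLinear (sympForm e).flip (Kmap R H e)
    (LinearMap.ext fun f => Module.Basis.ext e fun j => by
      simpa using JK e f j)
    (Module.Basis.ext e fun j => by simpa using KJ e j)

end Symp

/-- The maps `I₃ : Λ³H → Hom(H, Λ²H)`,
`I₃(v∧w∧u)(z) = ⟨z,w⟩ u∧v + ⟨z,u⟩ v∧w + ⟨z,v⟩ w∧u`, and `Φ : H ⊗ Λ²H → Hom(H, Λ²H)`,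
`Φ(x ⊗ η)(z) = ⟨z,x⟩ η`, are well defined and `R`-linear; `I₃` is injective, `Φ` is an
isomorphism, and `Hom(H, Λ²H)` is the internal direct sum of `I₃(Λ³H)` and `Φ(𝔱)`. -/
theorem stmt6 (P : Ideal ℤ) [P.IsPrime] (hP2 : (2 : ℤ) ∉ P) (hP3 : (3 : ℤ) ∉ P)
    {R : Type*} [CommRing R] [Algebra ℤ R] [IsLocalization.AtPrime R P]
    {H : Type*} [AddCommGroup H] [Module R H] {g : ℕ} (hg : 1 ≤ g)
    (e : Module.Basis (Fin (2 * g)) R H) :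
    ∃ (I₃ : ↥(⋀[R]^3 H) →ₗ[R] (H →ₗ[R] ↥(⋀[R]^2 H)))
      (Φ : (H ⊗[R] ↥(⋀[R]^2 H)) →ₗ[R] (H →ₗ[R] ↥(⋀[R]^2 H))),
      (∀ v w u z : H,
        I₃ (wedge3 v w u) z =
          sympForm e z w • wedge (R := R) u v + sympForm e z u • wedge (R := R) v w +
            sympForm e z v • wedge (R := R) w u) ∧
      Function.Injective I₃ ∧
      (∀ (x : H) (η : ↥(⋀[R]^2 H)) (z : H), Φ (x ⊗ₜ[R] η) z = sympForm e z x • η) ∧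
      Function.Bijective Φ ∧
      IsCompl (LinearMap.range I₃) ((tSub R H).map Φ) := by
  classical
  -- `3` is invertible in `R`
  have h3u : IsUnit (algebraMap ℤ R 3) :=
    IsLocalization.map_units (M := P.primeCompl) R ⟨3, hP3⟩
  have h3 : IsUnit (3 : R) := by simpa using h3u
  obtain ⟨c, hc⟩ := h3.exists_right_inv
  have hcz : ∀ z : ↥(⋀[R]^3 H), z = c • ((3 : R) • z) := by
    intro z
    rw [smul_smul, mul_comm, hc, one_smul]
  -- the maps
  set Φ : (H ⊗[R] ↥(⋀[R]^2 H)) →ₗ[R] (H →ₗ[R] ↥(⋀[R]^2 H)) :=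
    (dualTensorHom R H ↥(⋀[R]^2 H)) ∘ₗ
      (TensorProduct.map (JE R H e).toLinearMap LinearMap.id) with hΦdef
  set I₃ : ↥(⋀[R]^3 H) →ₗ[R] (H →ₗ[R] ↥(⋀[R]^2 H)) := Φ ∘ₗ Tl R H with hI₃def
  have hΦ : ∀ (x : H) (η : ↥(⋀[R]^2 H)) (z : H), Φ (x ⊗ₜ[R] η) z = sympForm e z x • η := by
    intro x η z
    simp only [hΦdef, LinearMap.comp_apply, TensorProduct.map_tmul, LinearMap.id_coe, id_eq,
      dualTensorHom_apply]
    rfl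
  -- bijectivity of Φ
  have hΦeq : Φ = ((TensorProduct.congr (JE R H e) (LinearEquiv.refl R ↥(⋀[R]^2 H))).trans
      (dualTensorHomEquivOfBasis e)).toLinearMap := by
    apply TensorProduct.ext'
    intro x η
    simp [hΦdef, dualTensorHomEquivOfBasis_apply]
  have hbij : Function.Bijective Φ := by
    rw [hΦeq]
    exact ((TensorProduct.congr (JE R H e) (LinearEquiv.refl R ↥(⋀[R]^2 H))).trans
      (dualTensorHomEquivOfBasis e)).bijective
  -- injectivity of T
  have hTinj : Function.Injective (Tl R H) := by
    intro x y h
    have h2 := congrArg (μl R H) h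
    rw [μl_Tl, μl_Tl] at h2
    rw [hcz x, h2, ← hcz y]
  refine ⟨I₃, Φ, ?_, ?_, hΦ, hbij, ?_⟩
  · intro v w u z
    rw [hI₃def, LinearMap.comp_apply, Tl_wedge3]
    simp only [map_add, LinearMap.add_apply, hΦ]
  · exact hbij.injective.comp hTinj
  · -- the direct sum decomposition
    have hcompl : IsCompl (LinearMap.range (Tl R H)) (tSub R H) := by
      constructor
      · rw [disjoint_iff, eq_bot_iff]
        rintro x hx
        rw [Submodule.mem_inf] at hx
        obtain ⟨⟨y, rfl⟩, hxt⟩ := hx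
        have h0 : μl R H (Tl R H y) = 0 := LinearMap.mem_ker.mp (t_le_ker R H hxt)
        rw [μl_Tl] at h0
        have hy : y = 0 := by rw [hcz y, h0, smul_zero]
        simp [hy]
      · rw [codisjoint_iff, eq_top_iff]
        rintro m -
        have hmem := pi_mem c hc m
        have hm : m = Tl R H (c • μl R H m) + (m - c • Tl R H (μl R H m)) := by
          rw [map_smul]; abel
        rw [hm]
        exact Submodule.add_mem _ (Submodule.mem_sup_left ⟨_, rfl⟩)
          (Submodule.mem_sup_right hmem)
    have hrange : LinearMap.range I₃ = Submodule.map Φ (LinearMap.range (Tl R H)) :=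
      LinearMap.range_comp _ _
    rw [hrange]
    constructor
    · rw [disjoint_iff, ← Submodule.map_inf _ hbij.injective,
        disjoint_iff.mp hcompl.disjoint, Submodule.map_bot]
    · rw [codisjoint_iff, ← Submodule.map_sup, codisjoint_iff.mp hcompl.codisjoint,
        Submodule.map_top, LinearMap.range_eq_top.mpr hbij.surjective]

end Paper
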